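/- Let n = 2, m = 1, C = {(x₁,x₂) : |x₁| ≤ 1, |x₂| ≤ 1}, F(y) = Ay with A = [[−2,3],[−2,1]], and B = (1,1)ᵀ. Let y⁰ = (0.7, −0.5)ᵀ and y² = (−0.6, 0.6)ᵀ. Then T_C(y⁰,y²) = ∞, i.e. y² is not reachable from y⁰ under the state constraint C. -/

import Mathlib

noncomputable section
open MeasureTheory Set RealInnerProductSpace
open scoped ENNReal

/-- Euclidean state space `ℝ^n`. -/
abbrev Euc (n : ℕ) := EuclideanSpace ℝ (Fin n)

/-- Orthogonal projection onto a subspace, viewed as a map into the ambient space. -/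
noncomputable def projS {n : ℕ} (G : Submodule ℝ (Euc n)) (x : Euc n) : Euc n :=
  (G.orthogonalProjectionOnto x : Euc n)

/-- The set of admissible controllability times `T` for the system `ẏ = F(y) + B u`
with state constraint `y(t) ∈ C`, steering `y0` to `y1`.  The control `u` is a
measurable essentially bounded function; the absolutely continuous trajectory `y`
is encoded via the integral equation. -/
def ctrlTimes {n m : ℕ} (F : Euc n → Euc n) (B : Euc m →ₗ[ℝ] Euc n)
    (C : Set (Euc n)) (y0 y1 : Euc n) : Set ℝ :=
  {T | 0 < T ∧ ∃ u : ℝ → Euc m, ∃ y : ℝ → Euc n,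
    Measurable u ∧ (∃ M : ℝ, ∀ t ∈ Icc (0:ℝ) T, ‖u t‖ ≤ M) ∧
    ContinuousOn y (Icc 0 T) ∧
    IntervalIntegrable (fun s => F (y s) + B (u s)) volume 0 T ∧
    (∀ t ∈ Icc (0:ℝ) T, y t = y0 + ∫ s in (0:ℝ)..t, (F (y s) + B (u s))) ∧
    (∀ t ∈ Icc (0:ℝ) T, y t ∈ C) ∧ y 0 = y0 ∧ y T = y1}

/-- The minimal controllability time `T_C(y0, y1)` (with the convention `inf ∅ = ∞`). -/
noncomputable def minTime {n m : ℕ} (F : Euc n → Euc n) (B : Euc m →ₗ[ℝ] Euc n)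
    (C : Set (Euc n)) (y0 y1 : Euc n) : ℝ≥0∞ :=
  sInf (ENNReal.ofReal '' ctrlTimes F B C y0 y1)

/-- The vector `(a, b)ᵀ ∈ ℝ²`. -/
noncomputable def v2 (a b : ℝ) : Euc 2 := (WithLp.equiv 2 _).symm ![a, b]

/-- The drift matrix `A = [[-2, 3], [-2, 1]]`. -/
noncomputable def Asq : Euc 2 →ₗ[ℝ] Euc 2 :=
  Matrix.toEuclideanLin (!![-2, 3; -2, 1] : Matrix (Fin 2) (Fin 2) ℝ)

/-- The control map `B = (1, 1)ᵀ`. -/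
noncomputable def Bsq : Euc 1 →ₗ[ℝ] Euc 2 :=
  Matrix.toEuclideanLin (!![1; 1] : Matrix (Fin 2) (Fin 1) ℝ)

/-- The square `C = {(x₁,x₂) : |x₁| ≤ 1, |x₂| ≤ 1}`. -/
def sqC : Set (Euc 2) := {x : Euc 2 | |x 0| ≤ 1 ∧ |x 1| ≤ 1}

/-- Auxiliary linear functional `x ↦ x₀ - x₁`. -/
noncomputable def phiAux : Euc 2 →L[ℝ] ℝ :=
  EuclideanSpace.proj (0 : Fin 2) - EuclideanSpace.proj 1

lemma phiAux_apply (x : Euc 2) : phiAux x = x 0 - x 1 := by simp [phiAux]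

lemma phiAux_dyn (x : Euc 2) (v : Euc 1) : phiAux (Asq x + Bsq v) = 2 * x 1 := by
  rw [phiAux_apply]
  simp [Asq, Bsq, Matrix.toEuclideanLin_apply, Matrix.mulVec, dotProduct,
    Fin.sum_univ_two, Fin.sum_univ_one]
  ring

/-- Example 4 of the paper, continued.  For the linear system
`ẏ = Ay + Bu` with `A = [[-2,3],[-2,1]]`, `B = (1,1)ᵀ` and constraint set the unit
square, the point `y² = (-0.6, 0.6)ᵀ` is not reachable from `y⁰ = (0.7, -0.5)ᵀ`
under the state constraint: `T_C(y⁰, y²) = ∞`. -/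
theorem example4_not_reachable :
    minTime (fun y => Asq y) Bsq sqC (v2 0.7 (-0.5)) (v2 (-0.6) 0.6) = ⊤ := by
  have hempty : ctrlTimes (fun y => Asq y) Bsq sqC (v2 0.7 (-0.5)) (v2 (-0.6) 0.6) = ∅ := by
    rw [eq_empty_iff_forall_notMem]
    rintro T ⟨hT, u, y, -, -, hycont, hint, heq, hC, hy0, hyT⟩
    set w : ℝ → ℝ := fun t => y t 0 - y t 1 with hwdef
    have hw0 : w 0 = 1.2 := by
      show y 0 0 - y 0 1 = 1.2
      rw [hy0]; simp [v2]; norm_num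
    have hwT : w T = -1.2 := by
      show y T 0 - y T 1 = -1.2
      rw [hyT]; simp [v2]; norm_num
    have hsub : ∀ t ∈ Icc (0:ℝ) T, uIcc (0:ℝ) t ⊆ uIcc (0:ℝ) T := by
      intro t ht
      rw [uIcc_of_le ht.1, uIcc_of_le (ht.1.trans ht.2)]
      exact Icc_subset_Icc le_rfl ht.2
    have hvint : ∀ t ∈ Icc (0:ℝ) T,
        IntervalIntegrable (fun s => Asq (y s) + Bsq (u s)) volume 0 t :=
      fun t ht => hint.mono_set (hsub t ht)
    have hphi : ∀ s : ℝ, phiAux (Asq (y s) + Bsq (u s)) = 2 * y s 1 :=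
      fun s => phiAux_dyn (y s) (u s)
    -- the scalar integral equation
    have hwt : ∀ t ∈ Icc (0:ℝ) T, w t = 1.2 + ∫ s in (0:ℝ)..t, 2 * y s 1 := by
      intro t ht
      have h1 := heq t ht
      have h2 : w t = phiAux (y t) := (phiAux_apply _).symm
      rw [h2, h1, map_add, ← phiAux.intervalIntegral_comp_comm (hvint t ht)]
      simp only [hphi]
      congr 1
      rw [phiAux_apply]; simp [v2]; norm_num
    -- scalar interval integrability
    have hsc : ContinuousOn (fun s => 2 * y s 1) (Icc 0 T) :=
      (continuousOn_const.mul (((EuclideanSpace.proj (1 : Fin 2) : Euc 2 →L[ℝ] ℝ).continuous).comp_continuousOn hycont))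
    have hsint : ∀ t ∈ Icc (0:ℝ) T,
        IntervalIntegrable (fun s => 2 * y s 1) volume 0 t := by
      intro t ht
      exact (hsc.mono ((hsub t ht).trans (by rw [uIcc_of_le hT.le]))).intervalIntegrable
    -- the last time `w ≥ -1.1`
    set S : Set ℝ := Icc (0:ℝ) T ∩ w ⁻¹' (Ici (-1.1)) with hSdef
    have hS0 : (0:ℝ) ∈ S := ⟨⟨le_rfl, hT.le⟩, by rw [mem_preimage, mem_Ici, hw0]; norm_num⟩
    have hSbdd : BddAbove S := ⟨T, fun t ht => ht.1.2⟩
    have hwcont : ContinuousOn w (Icc 0 T) :=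
      (((EuclideanSpace.proj (0 : Fin 2) : Euc 2 →L[ℝ] ℝ).continuous).comp_continuousOn hycont).sub
        (((EuclideanSpace.proj (1 : Fin 2) : Euc 2 →L[ℝ] ℝ).continuous).comp_continuousOn hycont)
    have hSclosed : IsClosed S :=
      hwcont.preimage_isClosed_of_isClosed isClosed_Icc isClosed_Ici
    set t1 := sSup S with ht1def
    have ht1S : t1 ∈ S := hSclosed.csSup_mem ⟨0, hS0⟩ hSbdd
    have ht1Icc : t1 ∈ Icc (0:ℝ) T := ht1S.1
    have ht1w : -1.1 ≤ w t1 := ht1S.2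
    have hst : ∀ s ∈ Ioc t1 T, w s < -1.1 := by
      intro s hs
      by_contra h
      push_neg at h
      have hsS : s ∈ S := ⟨⟨ht1Icc.1.trans hs.1.le, hs.2⟩, h⟩
      exact absurd (le_csSup hSbdd hsS) (not_le.mpr hs.1)
    have key : 0 ≤ ∫ s in t1..T, 2 * y s 1 := by
      rw [intervalIntegral.integral_of_le ht1Icc.2]
      refine setIntegral_nonneg measurableSet_Ioc (fun s hs => ?_)
      have hsI : s ∈ Icc (0:ℝ) T := ⟨ht1Icc.1.trans hs.1.le, hs.2⟩
      have hc := hC s hsI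
      rw [sqC, mem_setOf_eq] at hc
      have h0 : -1 ≤ y s 0 := (abs_le.mp hc.1).1
      have hws : w s < -1.1 := hst s hs
      have hys : y s 0 - y s 1 = w s := rfl
      linarith
    have hTmem : T ∈ Icc (0:ℝ) T := ⟨hT.le, le_rfl⟩
    have hdiff : (∫ s in (0:ℝ)..T, 2 * y s 1) - (∫ s in (0:ℝ)..t1, 2 * y s 1)
        = ∫ s in t1..T, 2 * y s 1 :=
      intervalIntegral.integral_interval_sub_left (hsint T hTmem) (hsint t1 ht1Icc)
    have e1 := hwt T hTmem
    have e2 := hwt t1 ht1Icc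
    rw [hwT] at e1
    linarith
  rw [minTime, hempty]
  simp
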